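/- For every natural number r ≥ 1, the number of vacillating tableaux of shape ∅ and length r equals the Bell number B(r). Here a vacillating tableau of shape λ and length r is a sequence (t_0, t_1, …, t_{2r−1}) of partitions with t_0 = ∅ and t_{2r−1} = λ such that for each odd index m the partition t_m is obtained from t_{m−1} either by adding one box or leaving it unchanged, and for each even index m ≥ 2 the partition t_m is obtained from t_{m−1} either by removing one box or leaving it unchanged. -/

import Mathlib

/-- A partition: a weakly decreasing, eventually zero sequence of naturals. -/
def IsPartition (l : ℕ → ℕ) : Prop :=
  Antitone l ∧ ∃ N, ∀ i, N ≤ i → l i = 0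

/-- The result of adding a box to row `i` (0-indexed). -/
def addRow (l : ℕ → ℕ) (i : ℕ) : ℕ → ℕ := Function.update l i (l i + 1)

/-- The number of boxes of a partition. -/
noncomputable def psize (l : ℕ → ℕ) : ℕ := Set.ncard {p : ℕ × ℕ | p.2 < l p.1}

/-- A vacillating tableau of shape `lam` and length `r`: a sequence
`t 0 = ∅, t 1, …, t (2r−1) = lam` of partitions such that at each odd index a
box is added or nothing changes, and at each even index `≥ 2` a box is removed
or nothing changes.  (Entries of the sequence beyond index `2r−1` are
normalized to the empty partition.) -/
def IsVacTab (r : ℕ) (t : ℕ → ℕ → ℕ) (lam : ℕ → ℕ) : Prop :=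
  (∀ m, m < 2 * r → IsPartition (t m)) ∧
  t 0 = (fun _ => 0) ∧
  t (2 * r - 1) = lam ∧
  (∀ m, m < 2 * r → m % 2 = 1 →
    (t m = t (m - 1) ∨ ∃ i, t m = addRow (t (m - 1)) i)) ∧
  (∀ m, 2 ≤ m → m < 2 * r → m % 2 = 0 →
    (t m = t (m - 1) ∨ ∃ i, t (m - 1) = addRow (t m) i)) ∧
  (∀ m, 2 * r ≤ m → t m = fun _ => 0)

/-- `w` is the weight vector of the vacillating tableau `t` (with parameter `δ`):
at an odd step `m`, `w m` is the content of the added box, or `δ − |t m|` if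
nothing changed; at an even step `m ≥ 2`, `w m` is `δ` minus the content of the
removed box, or `|t m|` if nothing changed. -/
def HasWeight (δ : ℤ) (r : ℕ) (t : ℕ → ℕ → ℕ) (w : ℕ → ℤ) : Prop :=
  ∀ m, 1 ≤ m → m < 2 * r →
    (m % 2 = 1 →
      ((t m = t (m - 1) ∧ w m = δ - psize (t m)) ∨
        ∃ i, t m = addRow (t (m - 1)) i ∧ w m = (t (m - 1) i : ℤ) - i)) ∧
    (m % 2 = 0 →
      ((t m = t (m - 1) ∧ w m = (psize (t m) : ℤ)) ∨
        ∃ i, t (m - 1) = addRow (t m) i ∧ w m = δ - ((t m i : ℤ) - i)))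

/-- The Bell number: the number of set partitions of an `n`-element set. -/
noncomputable def bell (n : ℕ) : ℕ :=
  Nat.card (Finpartition (Finset.univ : Finset (Fin n)))

namespace VacTab

open Finset

def zf : ℕ → ℕ := fun _ => 0

lemma isPartition_zf : IsPartition zf := ⟨fun _ _ _ => le_refl 0, 0, fun _ _ => rfl⟩

def rb (l : ℕ → ℕ) (j : ℕ) : ℕ → ℕ := Function.update l j (l j - 1)

lemma addRow_apply (l : ℕ → ℕ) (i x : ℕ) :
    addRow l i x = if x = i then l i + 1 else l x := by
  rw [addRow, Function.update_apply]
lemma rb_apply (l : ℕ → ℕ) (j x : ℕ) :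
    rb l j x = if x = j then l j - 1 else l x := by
  rw [rb, Function.update_apply]

lemma remSet_finite (hl : IsPartition l) : {j | l (j+1) < l j}.Finite := by
  obtain ⟨N, hN⟩ := hl.2
  apply Set.Finite.subset (Set.finite_Iio N)
  intro j hj
  simp only [Set.mem_setOf_eq] at hj
  by_contra h
  simp only [Set.mem_Iio, not_lt] at h
  have := hN j h
  omega

open scoped Classical in
noncomputable def remF (l : ℕ → ℕ) : Finset ℕ :=
  if h : {j | l (j+1) < l j}.Finite then h.toFinset else ∅

lemma mem_remF (hl : IsPartition l) {j : ℕ} : j ∈ remF l ↔ l (j+1) < l j := by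
  rw [remF, dif_pos (remSet_finite hl)]
  simp

noncomputable def addF (l : ℕ → ℕ) : Finset ℕ := insert 0 ((remF l).image (· + 1))

lemma mem_addF (hl : IsPartition l) {i : ℕ} :
    i ∈ addF l ↔ i = 0 ∨ ∃ j, i = j + 1 ∧ l (j+1) < l j := by
  simp only [addF, mem_insert, mem_image]
  constructor
  · rintro (rfl | ⟨j, hj, hji⟩)
    · exact Or.inl rfl
    · exact Or.inr ⟨j, hji.symm, (mem_remF hl).1 hj⟩
  · rintro (rfl | ⟨j, rfl, hj⟩)
    · exact Or.inl rfl
    · exact Or.inr ⟨j, (mem_remF hl).2 hj, rfl⟩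

lemma card_addF (hl : IsPartition l) : (addF l).card = (remF l).card + 1 := by
  rw [addF, card_insert_of_notMem (by simp),
    card_image_of_injective _ (add_left_injective 1)]

lemma remF_zf : remF zf = ∅ := by
  ext j; rw [mem_remF isPartition_zf]; simp [zf]

lemma addRow_ne (l : ℕ → ℕ) (i : ℕ) : addRow l i ≠ l := by
  intro h
  have := congrFun h i
  simp [addRow_apply] at this

lemma addRow_inj {l : ℕ → ℕ} {i i' : ℕ} (h : addRow l i = addRow l i') : i = i' := by
  by_contra hne
  have h1 := congrFun h i
  simp [addRow_apply, hne] at h1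

lemma isPartition_addRow (hl : IsPartition l) (hi : i ∈ addF l) :
    IsPartition (addRow l i) := by
  rw [mem_addF hl] at hi
  constructor
  · apply antitone_nat_of_succ_le
    intro n
    have h1 : l (n+1) ≤ l n := hl.1 (by omega)
    rw [addRow_apply, addRow_apply]
    rcases hi with rfl | ⟨j, rfl, hj⟩
    · rcases eq_or_ne n 0 with rfl | hn
      · rw [if_neg (by omega), if_pos rfl]; omega
      · rw [if_neg (by omega), if_neg hn]; exact h1
    · rcases eq_or_ne n j with rfl | hnj
      · rw [if_pos rfl, if_neg (by omega)]; omega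
      · rcases eq_or_ne n (j+1) with rfl | hnj1
        · rw [if_neg (by omega), if_pos rfl]; omega
        · rw [if_neg (by omega), if_neg hnj1]; exact h1
  · obtain ⟨N, hN⟩ := hl.2
    refine ⟨N + i + 1, fun x hx => ?_⟩
    rw [addRow_apply, if_neg (by omega)]
    exact hN x (by omega)

lemma isPartition_rb (hl : IsPartition l) (hj : j ∈ remF l) : IsPartition (rb l j) := by
  have hj' := (mem_remF hl).1 hj
  constructor
  · apply antitone_nat_of_succ_le
    intro n
    have h1 : l (n+1) ≤ l n := hl.1 (by omega)
    rw [rb_apply, rb_apply]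
    rcases eq_or_ne n j with rfl | hnj
    · rw [if_neg (by omega), if_pos rfl]
      omega
    · rcases eq_or_ne (n+1) j with rfl | hnj1
      · rw [if_pos rfl, if_neg hnj]
        omega
      · rw [if_neg hnj1, if_neg hnj]; exact h1
  · obtain ⟨N, hN⟩ := hl.2
    refine ⟨N + j + 1, fun x hx => ?_⟩
    rw [rb_apply, if_neg (by omega)]
    exact hN x (by omega)

lemma mem_addF_of_isPartition (hl : IsPartition l) (h : IsPartition (addRow l i)) :
    i ∈ addF l := by
  rw [mem_addF hl]
  rcases Nat.eq_zero_or_pos i with rfl | hi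
  · exact Or.inl rfl
  · obtain ⟨j, rfl⟩ : ∃ j, i = j + 1 := ⟨i - 1, by omega⟩
    right
    refine ⟨j, rfl, ?_⟩
    have h2 : addRow l (j+1) (j+1) ≤ addRow l (j+1) j := h.1 (by omega)
    rw [addRow_apply, addRow_apply, if_pos rfl, if_neg (by omega)] at h2
    omega

lemma addRow_rb (hl : IsPartition l) (hj : j ∈ remF l) : addRow (rb l j) j = l := by
  have hj' := (mem_remF hl).1 hj
  funext x
  rcases eq_or_ne x j with rfl | hx
  · rw [addRow_apply, if_pos rfl, rb_apply, if_pos rfl]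
    omega
  · rw [addRow_apply, if_neg hx, rb_apply, if_neg hx]

lemma rb_addRow (l : ℕ → ℕ) (i : ℕ) : rb (addRow l i) i = l := by
  funext x
  rcases eq_or_ne x i with rfl | hx
  · rw [rb_apply, if_pos rfl, addRow_apply, if_pos rfl]
    omega
  · rw [rb_apply, if_neg hx, addRow_apply, if_neg hx]

lemma rem_of_addRow (hmu : IsPartition μ) (hlam : IsPartition lam)
    (h : lam = addRow μ i) : i ∈ remF lam ∧ μ = rb lam i := by
  have h1 : lam i = μ i + 1 := by rw [h, addRow_apply, if_pos rfl]
  have h2 : lam (i+1) = μ (i+1) := by rw [h, addRow_apply, if_neg (by omega)]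
  have h3 : μ (i+1) ≤ μ i := hmu.1 (by omega)
  refine ⟨(mem_remF hlam).2 (by omega), ?_⟩
  rw [h, rb_addRow]

lemma rb_inj (hl : IsPartition l) (hj : j ∈ remF l) (hj' : j' ∈ remF l)
    (h : rb l j = rb l j') : j = j' := by
  have h0 := (mem_remF hl).1 hj
  by_contra hne
  have h1 := congrFun h j
  rw [rb_apply, rb_apply, if_pos rfl, if_neg hne] at h1
  omega

lemma rb_ne (hl : IsPartition l) (hj : j ∈ remF l) : rb l j ≠ l := by
  have h0 := (mem_remF hl).1 hj
  intro h
  have h1 := congrFun h j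
  rw [rb_apply, if_pos rfl] at h1
  omega

lemma mem_remF_addRow (hl : IsPartition l) (hi : i ∈ addF l) :
    i ∈ remF (addRow l i) := by
  rw [mem_remF (isPartition_addRow hl hi), addRow_apply, addRow_apply,
    if_neg (by omega), if_pos rfl]
  have := hl.1 (show i ≤ i + 1 by omega)
  omega

lemma mem_addF_rb (hl : IsPartition l) (hj : j ∈ remF l) : j ∈ addF (rb l j) := by
  have hj' := (mem_remF hl).1 hj
  rw [mem_addF (isPartition_rb hl hj)]
  rcases Nat.eq_zero_or_pos j with rfl | hpos
  · exact Or.inl rfl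
  · obtain ⟨j', rfl⟩ : ∃ j', j = j' + 1 := ⟨j - 1, by omega⟩
    right
    refine ⟨j', rfl, ?_⟩
    rw [rb_apply, rb_apply, if_pos rfl, if_neg (by omega)]
    have h2 : l (j' + 1) ≤ l j' := hl.1 (by omega)
    omega

lemma rb_addRow_comm (l : ℕ → ℕ) (hij : i ≠ j) :
    rb (addRow l i) j = addRow (rb l j) i := by
  funext x
  simp only [rb_apply, addRow_apply]
  by_cases h1 : x = i <;> by_cases h2 : x = j
  · subst h1; exact absurd h2 hij
  · subst h1; simp [hij, h2]
  · subst h2; simp [hij, Ne.symm hij]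
  · simp [h1, h2]

lemma offdiag_mem (hl : IsPartition l) (hij : i ≠ j) :
    (i ∈ addF l ∧ j ∈ remF (addRow l i)) ↔ (j ∈ remF l ∧ i ∈ addF (rb l j)) := by
  constructor
  · rintro ⟨hi, hj⟩
    have hAi := isPartition_addRow hl hi
    rw [mem_remF hAi, addRow_apply, addRow_apply, if_neg (show ¬j = i from fun h => hij h.symm)]
      at hj
    rw [mem_addF hl] at hi
    have hjr : l (j+1) < l j := by
      rcases eq_or_ne (j+1) i with he | he
      · rw [if_pos he] at hj
        rw [← he] at hj
        omega
      · rwa [if_neg he] at hj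
    have hjR : j ∈ remF l := (mem_remF hl).2 hjr
    refine ⟨hjR, ?_⟩
    rw [mem_addF (isPartition_rb hl hjR)]
    rcases hi with rfl | ⟨i', rfl, hi'⟩
    · exact Or.inl rfl
    · right
      refine ⟨i', rfl, ?_⟩
      rw [rb_apply, rb_apply, if_neg (show ¬i' + 1 = j from fun h => hij h)]
      rcases eq_or_ne i' j with he | hne
      · rw [if_pos he]
        rw [if_pos (show j + 1 = i' + 1 by omega)] at hj
        omega
      · rw [if_neg hne]
        exact hi'
  · rintro ⟨hjR, hi⟩
    have hjr := (mem_remF hl).1 hjR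
    rw [mem_addF (isPartition_rb hl hjR)] at hi
    rcases hi with rfl | ⟨i', rfl, hi'⟩
    · have hiA : (0 : ℕ) ∈ addF l := (mem_addF hl).2 (Or.inl rfl)
      refine ⟨hiA, ?_⟩
      rw [mem_remF (isPartition_addRow hl hiA), addRow_apply, addRow_apply,
        if_neg (show ¬j = 0 from fun h => hij h.symm), if_neg (show ¬j + 1 = 0 by omega)]
      exact hjr
    · rw [rb_apply, rb_apply, if_neg (show ¬i' + 1 = j from fun h => hij h)] at hi'
      rcases eq_or_ne i' j with he | hne
      · rw [if_pos he] at hi'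
        rw [he] at hi'
        have hiA : (i' + 1) ∈ addF l :=
          (mem_addF hl).2 (Or.inr ⟨i', rfl, by rw [he]; omega⟩)
        refine ⟨hiA, ?_⟩
        rw [mem_remF (isPartition_addRow hl hiA), addRow_apply, addRow_apply,
          if_neg (show ¬j = i' + 1 from fun h => hij h.symm),
          if_pos (show j + 1 = i' + 1 by omega)]
        rw [show i' + 1 = j + 1 by omega]
        omega
      · rw [if_neg hne] at hi'
        have hiA : (i' + 1) ∈ addF l := (mem_addF hl).2 (Or.inr ⟨i', rfl, hi'⟩)
        refine ⟨hiA, ?_⟩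
        rw [mem_remF (isPartition_addRow hl hiA), addRow_apply, addRow_apply,
          if_neg (show ¬j = i' + 1 from fun h => hij h.symm),
          if_neg (show ¬j + 1 = i' + 1 from fun h => hne (by omega))]
        exact hjr


lemma crux (hl : IsPartition l) (g : (ℕ → ℕ) → ℕ) :
    ∑ i ∈ addF l, ∑ j ∈ remF (addRow l i), g (rb (addRow l i) j)
      = (∑ j ∈ remF l, ∑ i ∈ addF (rb l j), g (addRow (rb l j) i)) + g l := by
  have hL : ∀ i ∈ addF l, ∑ j ∈ remF (addRow l i), g (rb (addRow l i) j)
      = (∑ j ∈ (remF (addRow l i)).erase i, g (rb (addRow l i) j)) + g l := by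
    intro i hi
    rw [← Finset.sum_erase_add _ _ (mem_remF_addRow hl hi), rb_addRow]
  have hR : ∀ j ∈ remF l, ∑ i ∈ addF (rb l j), g (addRow (rb l j) i)
      = (∑ i ∈ (addF (rb l j)).erase j, g (addRow (rb l j) i)) + g l := by
    intro j hj
    rw [← Finset.sum_erase_add _ _ (mem_addF_rb hl hj), addRow_rb hl hj]
  rw [Finset.sum_congr rfl hL, Finset.sum_congr rfl hR]
  rw [Finset.sum_add_distrib, Finset.sum_add_distrib, Finset.sum_const, Finset.sum_const]
  rw [card_addF hl]
  have key : ∑ i ∈ addF l, ∑ j ∈ (remF (addRow l i)).erase i, g (rb (addRow l i) j)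
      = ∑ j ∈ remF l, ∑ i ∈ (addF (rb l j)).erase j, g (addRow (rb l j) i) := by
    rw [Finset.sum_sigma', Finset.sum_sigma']
    refine Finset.sum_nbij' (fun x => ⟨x.2, x.1⟩) (fun x => ⟨x.2, x.1⟩) ?_ ?_ ?_ ?_ ?_
    · rintro ⟨i, j⟩ hx
      rw [Finset.mem_sigma] at hx
      obtain ⟨hi, hj⟩ := hx
      rw [Finset.mem_erase] at hj
      have hij : i ≠ j := fun h => hj.1 h.symm
      have := (offdiag_mem hl hij).1 ⟨hi, hj.2⟩
      rw [Finset.mem_sigma, Finset.mem_erase]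
      exact ⟨this.1, hij, this.2⟩
    · rintro ⟨j, i⟩ hx
      rw [Finset.mem_sigma] at hx
      obtain ⟨hj, hi⟩ := hx
      rw [Finset.mem_erase] at hi
      have hij : i ≠ j := hi.1
      have := (offdiag_mem hl hij).2 ⟨hj, hi.2⟩
      rw [Finset.mem_sigma, Finset.mem_erase]
      exact ⟨this.1, fun h => hij h.symm, this.2⟩
    · rintro ⟨i, j⟩ _; rfl
    · rintro ⟨j, i⟩ _; rfl
    · rintro ⟨i, j⟩ hx
      rw [Finset.mem_sigma] at hx
      obtain ⟨hi, hj⟩ := hx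
      rw [Finset.mem_erase] at hj
      have hij : i ≠ j := fun h => hj.1 h.symm
      simp only
      rw [rb_addRow_comm _ hij]
  rw [key]
  simp only [smul_eq_mul]
  ring

open scoped Classical in
noncomputable def y : ℕ → (ℕ → ℕ) → ℕ
  | 0 => fun l => if l = zf then 1 else 0
  | a+1 => fun l => ∑ j ∈ remF l, y a (rb l j)

lemma addRow_ne_zf (l : ℕ → ℕ) (i : ℕ) : addRow l i ≠ zf := by
  intro h
  have := congrFun h i
  rw [addRow_apply, if_pos rfl] at this
  simp [zf] at this

lemma y_zf (a : ℕ) : y a zf = if a = 0 then 1 else 0 := by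
  cases a with
  | zero => simp [y]
  | succ a => simp [y, remF_zf]

lemma sum_y_addF : ∀ (a : ℕ) {l : ℕ → ℕ}, IsPartition l →
    ∑ i ∈ addF l, y a (addRow l i) = a * y (a-1) l := by
  intro a
  induction a with
  | zero =>
    intro l hl
    rw [Nat.zero_mul]
    apply Finset.sum_eq_zero
    intro i _
    simp only [y]
    rw [if_neg (addRow_ne_zf l i)]
  | succ a ih =>
    intro l hl
    have h1 : ∀ i ∈ addF l, y (a+1) (addRow l i)
        = ∑ j ∈ remF (addRow l i), y a (rb (addRow l i) j) := fun i _ => rfl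
    rw [Finset.sum_congr rfl h1, crux hl (y a)]
    have h2 : ∀ j ∈ remF l, ∑ i ∈ addF (rb l j), y a (addRow (rb l j) i)
        = a * y (a-1) (rb l j) := fun j hj => ih (isPartition_rb hl hj)
    rw [Finset.sum_congr rfl h2]
    cases a with
    | zero => simp
    | succ b =>
      rw [show b + 1 - 1 = b from rfl, show b + 1 + 1 - 1 = b + 1 from rfl,
        ← Finset.mul_sum,
        show (∑ j ∈ remF l, y b (rb l j)) = y (b+1) l from rfl]
      ring

def f : ℕ → ℕ → ℕ
  | 0 => fun a => if a = 0 then 1 else 0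
  | k+1 => fun a =>
      if (k+1) % 2 = 1 then f k a + (if a = 0 then 0 else f k (a-1))
      else f k a + (a+1) * f k (a+1)

lemma f_eq_zero : ∀ k a, k < a → f k a = 0 := by
  intro k
  induction k with
  | zero => intro a ha; simp [f]; omega
  | succ k ih =>
    intro a ha
    simp only [f]
    split_ifs with h1 h2
    · rw [ih a (by omega)]
    · rw [ih a (by omega), ih (a-1) (by omega)]
    · rw [ih a (by omega), ih (a+1) (by omega)]
      ring

/-! ### The walk model -/

def UpS (μ ν : ℕ → ℕ) : Prop := ν = μ ∨ ∃ i, ν = addRow μ i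
def DownS (μ ν : ℕ → ℕ) : Prop := ν = μ ∨ ∃ i, μ = addRow ν i
def Stp (par : ℕ) (μ ν : ℕ → ℕ) : Prop := if par = 1 then UpS μ ν else DownS μ ν

def IsVT (k : ℕ) (t : ℕ → ℕ → ℕ) (lam : ℕ → ℕ) : Prop :=
  (∀ m, m ≤ k → IsPartition (t m)) ∧ t 0 = zf ∧ t k = lam ∧
  (∀ m, 1 ≤ m → m ≤ k → Stp (m % 2) (t (m-1)) (t m)) ∧
  (∀ m, k < m → t m = zf)

lemma stp_refl (par : ℕ) (lam : ℕ → ℕ) : Stp par lam lam := by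
  rw [Stp]
  split_ifs
  · exact Or.inl rfl
  · exact Or.inl rfl

def trunc (k : ℕ) (t : ℕ → ℕ → ℕ) (m : ℕ) : ℕ → ℕ := if m ≤ k then t m else zf
def extseq (k : ℕ) (u : ℕ → ℕ → ℕ) (lam : ℕ → ℕ) (m : ℕ) : ℕ → ℕ :=
  if m ≤ k then u m else if m = k + 1 then lam else zf

lemma trunc_le {k m : ℕ} {t : ℕ → ℕ → ℕ} (hm : m ≤ k) : trunc k t m = t m := if_pos hm
lemma trunc_gt {k m : ℕ} {t : ℕ → ℕ → ℕ} (hm : k < m) : trunc k t m = zf := if_neg (by omega)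
lemma extseq_le {k m : ℕ} {u : ℕ → ℕ → ℕ} {lam : ℕ → ℕ} (hm : m ≤ k) :
    extseq k u lam m = u m := if_pos hm
lemma extseq_last {k : ℕ} {u : ℕ → ℕ → ℕ} {lam : ℕ → ℕ} : extseq k u lam (k+1) = lam := by
  rw [extseq, if_neg (by omega), if_pos rfl]
lemma extseq_gt {k m : ℕ} {u : ℕ → ℕ → ℕ} {lam : ℕ → ℕ} (hm : k + 1 < m) :
    extseq k u lam m = zf := by
  rw [extseq, if_neg (by omega), if_neg (by omega)]

lemma isVT_trunc {k : ℕ} {t : ℕ → ℕ → ℕ} {lam : ℕ → ℕ} (h : IsVT (k+1) t lam) :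
    IsVT k (trunc k t) (t k) := by
  obtain ⟨h1, h2, h3, h4, h5⟩ := h
  refine ⟨?_, ?_, ?_, ?_, ?_⟩
  · intro m hm
    rw [trunc_le hm]
    exact h1 m (by omega)
  · rw [trunc_le (by omega : 0 ≤ k)]
    exact h2
  · rw [trunc_le le_rfl]
  · intro m hm1 hm2
    rw [trunc_le hm2, trunc_le (by omega : m - 1 ≤ k)]
    exact h4 m hm1 (by omega)
  · intro m hm
    exact trunc_gt hm

lemma isVT_ext {k : ℕ} {u : ℕ → ℕ → ℕ} {μ lam : ℕ → ℕ} (hu : IsVT k u μ)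
    (hlam : IsPartition lam) (hstp : Stp ((k+1) % 2) μ lam) :
    IsVT (k+1) (extseq k u lam) lam := by
  obtain ⟨h1, h2, h3, h4, h5⟩ := hu
  refine ⟨?_, ?_, ?_, ?_, ?_⟩
  · intro m hm
    by_cases hmk : m ≤ k
    · rw [extseq_le hmk]; exact h1 m hmk
    · have : m = k + 1 := by omega
      subst this
      rw [extseq_last]; exact hlam
  · rw [extseq_le (by omega : 0 ≤ k)]; exact h2
  · exact extseq_last
  · intro m hm1 hm2
    by_cases hmk : m ≤ k
    · rw [extseq_le hmk, extseq_le (by omega : m - 1 ≤ k)]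
      exact h4 m hm1 hmk
    · have : m = k + 1 := by omega
      subst this
      rw [extseq_last, show k + 1 - 1 = k from rfl, extseq_le le_rfl, h3]
      exact hstp
  · intro m hm
    exact extseq_gt hm

lemma extseq_injOn {k : ℕ} {u u' : ℕ → ℕ → ℕ} {μ μ' lam : ℕ → ℕ}
    (hu : IsVT k u μ) (hu' : IsVT k u' μ')
    (h : extseq k u lam = extseq k u' lam) : u = u' := by
  funext m
  by_cases hm : m ≤ k
  · have := congrFun h m
    rwa [extseq_le hm, extseq_le hm] at this
  · rw [hu.2.2.2.2 m (by omega), hu'.2.2.2.2 m (by omega)]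

noncomputable def stepEquiv (k : ℕ) (lam : ℕ → ℕ) (hlam : IsPartition lam)
    (Q : Finset ℕ) (p : ℕ → ℕ → ℕ)
    (hstep : ∀ j ∈ Q, Stp ((k+1) % 2) (p j) lam)
    (hchar : ∀ μ, IsPartition μ → Stp ((k+1) % 2) μ lam → μ ≠ lam → ∃ j ∈ Q, μ = p j)
    (hinj : ∀ j ∈ Q, ∀ j' ∈ Q, p j = p j' → j = j')
    (hne : ∀ j ∈ Q, p j ≠ lam) :
    ({t // IsVT k t lam} ⊕ (Σ j : Q, {t // IsVT k t (p j)})) ≃ {t // IsVT (k+1) t lam} := by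
  apply Equiv.ofBijective (Sum.elim
    (fun w : {t // IsVT k t lam} =>
      (⟨extseq k w.1 lam, isVT_ext w.2 hlam (stp_refl _ lam)⟩ : {t // IsVT (k+1) t lam}))
    (fun z : Σ j : Q, {t // IsVT k t (p j)} =>
      ⟨extseq k z.2.1 lam, isVT_ext z.2.2 hlam (hstep z.1.1 z.1.2)⟩))
  constructor
  · rintro (⟨u, hu⟩ | ⟨⟨j, hj⟩, ⟨u, hu⟩⟩) (⟨u', hu'⟩ | ⟨⟨j', hj'⟩, ⟨u', hu'⟩⟩) hxy <;>
      simp only [Sum.elim_inl, Sum.elim_inr, Subtype.mk.injEq] at hxy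
    · obtain rfl := extseq_injOn hu hu' hxy
      rfl
    · obtain rfl := extseq_injOn hu hu' hxy
      exact absurd (hu'.2.2.1.symm.trans hu.2.2.1) (fun h => hne j' hj' h)
    · obtain rfl := extseq_injOn hu hu' hxy
      exact absurd (hu.2.2.1.symm.trans hu'.2.2.1) (fun h => hne j hj h)
    · obtain rfl := extseq_injOn hu hu' hxy
      obtain rfl : j = j' := hinj j hj j' hj' (hu.2.2.1.symm.trans hu'.2.2.1)
      rfl
  · rintro ⟨t, ht⟩
    by_cases hc : t k = lam
    · refine ⟨Sum.inl ⟨trunc k t, by rw [← hc]; exact isVT_trunc ht⟩, ?_⟩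
      apply Subtype.ext
      show extseq k (trunc k t) lam = t
      funext m
      by_cases hm : m ≤ k
      · rw [extseq_le hm, trunc_le hm]
      · rcases eq_or_ne m (k+1) with rfl | hm2
        · rw [extseq_last, ht.2.2.1]
        · rw [extseq_gt (by omega), ht.2.2.2.2 m (by omega)]
    · have hstp : Stp ((k+1) % 2) (t k) lam := by
        have h4 := ht.2.2.2.1 (k+1) (by omega) le_rfl
        rw [show k + 1 - 1 = k from rfl] at h4
        rwa [ht.2.2.1] at h4
      obtain ⟨j, hjQ, hje⟩ := hchar (t k) (ht.1 k (by omega)) hstp hc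
      refine ⟨Sum.inr ⟨⟨j, hjQ⟩, ⟨trunc k t, by rw [← hje]; exact isVT_trunc ht⟩⟩, ?_⟩
      apply Subtype.ext
      show extseq k (trunc k t) lam = t
      funext m
      by_cases hm : m ≤ k
      · rw [extseq_le hm, trunc_le hm]
      · rcases eq_or_ne m (k+1) with rfl | hm2
        · rw [extseq_last, ht.2.2.1]
        · rw [extseq_gt (by omega), ht.2.2.2.2 m (by omega)]

/-- hypotheses of `stepEquiv` in the odd (up-step) case -/
lemma odd_hyps (k : ℕ) (lam : ℕ → ℕ) (hlam : IsPartition lam) (hpar : (k+1) % 2 = 1) :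
    (∀ j ∈ remF lam, Stp ((k+1) % 2) (rb lam j) lam) ∧
    (∀ μ, IsPartition μ → Stp ((k+1) % 2) μ lam → μ ≠ lam → ∃ j ∈ remF lam, μ = rb lam j) ∧
    (∀ j ∈ remF lam, ∀ j' ∈ remF lam, rb lam j = rb lam j' → j = j') ∧
    (∀ j ∈ remF lam, rb lam j ≠ lam) := by
  refine ⟨?_, ?_, ?_, ?_⟩
  · intro j hj
    rw [Stp, if_pos hpar]
    exact Or.inr ⟨j, (addRow_rb hlam hj).symm⟩
  · intro μ hμ hstp hne
    rw [Stp, if_pos hpar] at hstp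
    rcases hstp with h | ⟨i, hi⟩
    · exact absurd h.symm hne
    · obtain ⟨h1, h2⟩ := rem_of_addRow hμ hlam hi
      exact ⟨i, h1, h2⟩
  · exact fun j hj j' hj' h => rb_inj hlam hj hj' h
  · exact fun j hj => rb_ne hlam hj

/-- hypotheses of `stepEquiv` in the even (down-step) case -/
lemma even_hyps (k : ℕ) (lam : ℕ → ℕ) (hlam : IsPartition lam) (hpar : (k+1) % 2 = 0) :
    (∀ i ∈ addF lam, Stp ((k+1) % 2) (addRow lam i) lam) ∧
    (∀ μ, IsPartition μ → Stp ((k+1) % 2) μ lam → μ ≠ lam → ∃ i ∈ addF lam, μ = addRow lam i) ∧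
    (∀ i ∈ addF lam, ∀ i' ∈ addF lam, addRow lam i = addRow lam i' → i = i') ∧
    (∀ i ∈ addF lam, addRow lam i ≠ lam) := by
  refine ⟨?_, ?_, ?_, ?_⟩
  · intro i hi
    rw [Stp, if_neg (by omega)]
    exact Or.inr ⟨i, rfl⟩
  · intro μ hμ hstp hne
    rw [Stp, if_neg (by omega)] at hstp
    rcases hstp with h | ⟨i, hi⟩
    · exact absurd h.symm hne
    · exact ⟨i, mem_addF_of_isPartition hlam (hi ▸ hμ), hi⟩
  · exact fun i _ i' _ h => addRow_inj h
  · exact fun i _ => addRow_ne lam i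

lemma finite_VT : ∀ (k : ℕ) (lam : ℕ → ℕ), Finite {t // IsVT k t lam} := by
  intro k
  induction k with
  | zero =>
    intro lam
    have : Subsingleton {t // IsVT 0 t lam} := by
      constructor
      rintro ⟨t, ht⟩ ⟨t', ht'⟩
      apply Subtype.ext
      show t = t'
      funext m
      rcases Nat.eq_zero_or_pos m with rfl | hm
      · rw [ht.2.1, ht'.2.1]
      · rw [ht.2.2.2.2 m hm, ht'.2.2.2.2 m hm]
    exact Finite.of_subsingleton
  | succ k ih =>
    intro lam
    by_cases hlam : IsPartition lam
    · rcases Nat.mod_two_eq_zero_or_one (k+1) with hpar | hpar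
      · obtain ⟨e1, e2, e3, e4⟩ := even_hyps k lam hlam hpar
        haveI : ∀ j : (addF lam), Finite {t // IsVT k t (addRow lam j)} := fun j => ih _
        haveI := ih lam
        exact Finite.of_equiv _ (stepEquiv k lam hlam (addF lam) (addRow lam) e1 e2 e3 e4)
      · obtain ⟨e1, e2, e3, e4⟩ := odd_hyps k lam hlam hpar
        haveI : ∀ j : (remF lam), Finite {t // IsVT k t (rb lam j)} := fun j => ih _
        haveI := ih lam
        exact Finite.of_equiv _ (stepEquiv k lam hlam (remF lam) (rb lam) e1 e2 e3 e4)
    · have : IsEmpty {t // IsVT (k+1) t lam} := by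
        constructor
        rintro ⟨t, ht⟩
        exact hlam (ht.2.2.1 ▸ ht.1 (k+1) le_rfl)
      exact Finite.of_subsingleton

lemma card_sigma_finset {Q : Finset ℕ} (A : ℕ → Type) [∀ j, Finite (A j)] :
    Nat.card (Σ j : Q, A j) = ∑ j ∈ Q, Nat.card (A j) := by
  classical
  haveI : ∀ j : Q, Fintype (A j) := fun j => Fintype.ofFinite _
  rw [Nat.card_eq_fintype_card, Fintype.card_sigma, ← Finset.sum_coe_sort Q fun j => Nat.card (A j)]
  apply Finset.sum_congr rfl
  intro j _
  rw [Nat.card_eq_fintype_card]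

lemma card_VT_zero (lam : ℕ → ℕ) :
    Nat.card {t // IsVT 0 t lam} = y 0 lam := by
  rcases eq_or_ne lam zf with rfl | h
  · rw [show y 0 zf = 1 by simp [y]]
    rw [Nat.card_eq_one_iff_unique]
    constructor
    · constructor
      rintro ⟨t, ht⟩ ⟨t', ht'⟩
      apply Subtype.ext
      show t = t'
      funext m
      rcases Nat.eq_zero_or_pos m with rfl | hm
      · rw [ht.2.1, ht'.2.1]
      · rw [ht.2.2.2.2 m hm, ht'.2.2.2.2 m hm]
    · refine ⟨⟨fun _ => zf, ?_⟩⟩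
      exact ⟨fun _ _ => isPartition_zf, rfl, rfl, fun m hm1 hm2 => by omega, fun _ _ => rfl⟩
  · rw [show y 0 lam = 0 by simp [y, h]]
    have : IsEmpty {t // IsVT 0 t lam} := by
      constructor
      rintro ⟨t, ht⟩
      exact h (ht.2.2.1.symm.trans ht.2.1)
    exact Nat.card_of_isEmpty

lemma card_VT : ∀ (k : ℕ) (lam : ℕ → ℕ), IsPartition lam →
    Nat.card {t // IsVT k t lam} = ∑ a ∈ Finset.range (k+1), f k a * y a lam := by
  intro k
  induction k with
  | zero =>
    intro lam _
    rw [card_VT_zero, Finset.sum_range_one, show f 0 0 = 1 by norm_num [f], one_mul]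
  | succ k ih =>
    intro lam hlam
    rcases Nat.mod_two_eq_zero_or_one (k+1) with hpar | hpar
    · -- even: down-steps into lam, predecessors are addRow lam i
      obtain ⟨e1, e2, e3, e4⟩ := even_hyps k lam hlam hpar
      haveI : ∀ j : ℕ, Finite {t // IsVT k t (addRow lam j)} := fun j => finite_VT _ _
      haveI := finite_VT k lam
      rw [← Nat.card_congr (stepEquiv k lam hlam (addF lam) (addRow lam) e1 e2 e3 e4),
        Nat.card_sum, card_sigma_finset (fun j => {t // IsVT k t (addRow lam j)}),
        ih lam hlam,
        Finset.sum_congr rfl (fun i hi => ih (addRow lam i) (isPartition_addRow hlam hi))]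
      have hswap : ∑ i ∈ addF lam, ∑ a ∈ Finset.range (k+1), f k a * y a (addRow lam i)
          = ∑ a ∈ Finset.range (k+1), f k a * (a * y (a-1) lam) := by
        rw [Finset.sum_comm]
        refine Finset.sum_congr rfl fun a _ => ?_
        rw [← Finset.mul_sum, sum_y_addF a hlam]
      rw [hswap]
      have hf : ∀ a, f (k+1) a = f k a + (a+1) * f k (a+1) := by
        intro a
        simp only [f]
        rw [if_neg (by omega)]
      have hrhs : ∑ a ∈ Finset.range (k+1+1), f (k+1) a * y a lam
          = (∑ a ∈ Finset.range (k+1), f k a * y a lam)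
            + ∑ a ∈ Finset.range (k+1), f k a * (a * y (a-1) lam) := by
        have e1 : ∀ a ∈ Finset.range (k+1+1), f (k+1) a * y a lam
            = f k a * y a lam + (a+1) * f k (a+1) * y a lam := by
          intro a _
          rw [hf a, add_mul]
        rw [Finset.sum_congr rfl e1, Finset.sum_add_distrib]
        congr 1
        · rw [Finset.sum_range_succ, f_eq_zero k (k+1) (by omega), zero_mul, add_zero]
        · rw [Finset.sum_range_succ, Finset.sum_range_succ,
            f_eq_zero k (k+1+1) (by omega), f_eq_zero k (k+1) (by omega)]
          simp only [mul_zero, zero_mul, add_zero]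
          rw [Finset.sum_range_succ' (fun a => f k a * (a * y (a-1) lam)) k]
          simp only [Nat.add_sub_cancel, Nat.zero_mul, Nat.mul_zero, add_zero]
          refine Finset.sum_congr rfl fun a _ => ?_
          ring
      rw [hrhs]
    · obtain ⟨e1, e2, e3, e4⟩ := odd_hyps k lam hlam hpar
      haveI : ∀ j : ℕ, Finite {t // IsVT k t (rb lam j)} := fun j => finite_VT _ _
      haveI := finite_VT k lam
      rw [← Nat.card_congr (stepEquiv k lam hlam (remF lam) (rb lam) e1 e2 e3 e4),
        Nat.card_sum, card_sigma_finset (fun j => {t // IsVT k t (rb lam j)}),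
        ih lam hlam,
        Finset.sum_congr rfl (fun j hj => ih (rb lam j) (isPartition_rb hlam hj))]
      have hswap : ∑ j ∈ remF lam, ∑ a ∈ Finset.range (k+1), f k a * y a (rb lam j)
          = ∑ a ∈ Finset.range (k+1), f k a * y (a+1) lam := by
        rw [Finset.sum_comm]
        refine Finset.sum_congr rfl fun a _ => ?_
        rw [← Finset.mul_sum]
        rfl
      rw [hswap]
      have hf : ∀ a, f (k+1) a = f k a + (if a = 0 then 0 else f k (a-1)) := by
        intro a
        simp only [f]
        rw [if_pos hpar]
      have hrhs : ∑ a ∈ Finset.range (k+1+1), f (k+1) a * y a lam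
          = (∑ a ∈ Finset.range (k+1), f k a * y a lam)
            + ∑ a ∈ Finset.range (k+1), f k a * y (a+1) lam := by
        have e1 : ∀ a ∈ Finset.range (k+1+1), f (k+1) a * y a lam
            = f k a * y a lam + (if a = 0 then 0 else f k (a-1)) * y a lam := by
          intro a _
          rw [hf a, add_mul]
        rw [Finset.sum_congr rfl e1, Finset.sum_add_distrib]
        congr 1
        · rw [Finset.sum_range_succ, f_eq_zero k (k+1) (by omega), zero_mul, add_zero]
        · rw [Finset.sum_range_succ' (fun a : ℕ => ((if a = 0 then 0 else f k (a-1)) * y a lam : ℕ)) (k+1)]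
          simp [Nat.succ_ne_zero]
      rw [hrhs]

lemma isVacTab_iff {r : ℕ} (hr : 1 ≤ r) (t : ℕ → ℕ → ℕ) (lam : ℕ → ℕ) :
    IsVacTab r t lam ↔ IsVT (2*r-1) t lam := by
  constructor
  · rintro ⟨h1, h2, h3, h4, h5, h6⟩
    refine ⟨fun m hm => h1 m (by omega), h2, h3, ?_, fun m hm => h6 m (by omega)⟩
    intro m hm1 hm2
    rcases Nat.mod_two_eq_zero_or_one m with hp | hp
    · rw [Stp, if_neg (by omega)]
      exact h5 m (by omega) (by omega) hp
    · rw [Stp, if_pos (by omega)]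
      exact h4 m (by omega) hp
  · rintro ⟨h1, h2, h3, h4, h5⟩
    refine ⟨fun m hm => h1 m (by omega), h2, h3, ?_, ?_, fun m hm => h5 m (by omega)⟩
    · intro m hm hp
      have := h4 m (by omega) (by omega)
      rwa [Stp, if_pos (by omega)] at this
    · intro m hm1 hm2 hp
      have := h4 m (by omega) (by omega)
      rwa [Stp, if_neg (by omega)] at this

lemma card_vac {r : ℕ} (hr : 1 ≤ r) :
    Nat.card {t : ℕ → ℕ → ℕ // IsVacTab r t (fun _ => 0)} = f (2*r-1) 0 := by
  have e : {t : ℕ → ℕ → ℕ // IsVacTab r t (fun _ => 0)} ≃ {t // IsVT (2*r-1) t zf} :=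
    Equiv.subtypeEquivRight (fun t => isVacTab_iff hr t zf)
  rw [Nat.card_congr e, card_VT (2*r-1) zf isPartition_zf]
  rw [Finset.sum_eq_single_of_mem 0 (by simp)]
  · rw [show y 0 zf = 1 by simp [y], mul_one]
  · intro a _ ha
    rw [y_zf, if_neg ha, mul_zero]

/-! ### The Bell side: partitions with marked blocks -/

section Bell

variable {α : Type*} [Fintype α] [DecidableEq α] {s : Finset α} {b : α}

lemma insert_sdiff_singleton (hb : b ∉ s) : insert b s \ {b} = s := by
  ext x
  simp only [Finset.mem_sdiff, Finset.mem_insert, Finset.mem_singleton]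
  constructor
  · rintro ⟨h1 | h1, h2⟩
    · exact absurd h1 h2
    · exact h1
  · intro hx
    exact ⟨Or.inr hx, fun h => hb (h ▸ hx)⟩

/-- extend a partition of `s` by the singleton part `{b}` -/
def extPart (hb : b ∉ s) (P : Finpartition s) : Finpartition (insert b s) :=
  P.extend (b := ({b} : Finset α)) (by simp [Finset.bot_eq_empty])
    (by simp [Finset.disjoint_singleton_right, hb])
    (by rw [Finset.sup_eq_union, Finset.union_comm, ← Finset.insert_eq])

lemma extPart_parts (hb : b ∉ s) (P : Finpartition s) :
    (extPart hb P).parts = insert {b} P.parts := rfl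

/-- add `b` to the part `B` of a partition of `s` -/
def joinPart (hb : b ∉ s) (P : Finpartition s) (B : Finset α) (hB : B ∈ P.parts) :
    Finpartition (insert b s) where
  parts := insert (insert b B) (P.parts.erase B)
  supIndep := by
    rw [Finset.supIndep_iff_pairwiseDisjoint, Finset.coe_insert]
    apply Set.PairwiseDisjoint.insert
    · exact P.disjoint.subset (by simp [Finset.erase_subset])
    · intro C hC hne
      rw [Finset.coe_erase] at hC
      obtain ⟨hC1, hC2⟩ := hC
      have hbC : b ∉ C := fun h => hb (P.le hC1 h)
      have hdisj : Disjoint B C := P.disjoint hB hC1 (fun h => hC2 (h ▸ rfl))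
      rw [id, id, Finset.disjoint_insert_left]
      exact ⟨hbC, hdisj⟩
  sup_parts := by
    have h1 := P.sup_parts
    rw [← Finset.insert_erase hB, Finset.sup_insert] at h1
    rw [Finset.sup_insert]
    simp only [id_eq] at h1 ⊢
    rw [Finset.sup_eq_union] at h1 ⊢
    rw [Finset.insert_union, h1]
  bot_notMem := by
    rw [Finset.bot_eq_empty, Finset.mem_insert]
    rintro (h | h)
    · exact (Finset.insert_ne_empty b B) h.symm
    · exact P.bot_notMem (Finset.mem_of_mem_erase h)

lemma joinPart_parts (hb : b ∉ s) (P : Finpartition s) (B : Finset α) (hB : B ∈ P.parts) :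
    (joinPart hb P B hB).parts = insert (insert b B) (P.parts.erase B) := rfl

/-- restrict a partition of `insert b s` to `s` -/
def resPart (hb : b ∉ s) (Q : Finpartition (insert b s)) : Finpartition s :=
  (Q.avoid {b}).copy (by rw [insert_sdiff_singleton hb])

lemma part_spec (Q : Finpartition (insert b s)) :
    Q.part b ∈ Q.parts ∧ b ∈ Q.part b :=
  ⟨Q.part_mem.2 (Finset.mem_insert_self b s), Q.mem_part (Finset.mem_insert_self b s)⟩

lemma part_unique {Q : Finpartition (insert b s)} {D : Finset α}
    (hD : D ∈ Q.parts) (hbD : b ∈ D) : D = Q.part b :=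
  (Q.part_eq_of_mem hD hbD).symm

lemma mem_resPart (hb : b ∉ s) (Q : Finpartition (insert b s)) {C : Finset α} :
    C ∈ (resPart hb Q).parts ↔
      ((C ∈ Q.parts ∧ b ∉ C) ∨ (C = (Q.part b).erase b ∧ C.Nonempty)) := by
  rw [resPart, Finpartition.copy_parts, Finpartition.mem_avoid]
  constructor
  · rintro ⟨D, hD, hne, rfl⟩
    rw [Finset.le_iff_subset, Finset.subset_singleton_iff] at hne
    push_neg at hne
    by_cases hbD : b ∈ D
    · right
      have hDT : D = Q.part b := part_unique hD hbD
      refine ⟨by rw [hDT, Finset.sdiff_singleton_eq_erase], ?_⟩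
      rw [Finset.sdiff_singleton_eq_erase]
      rcases Finset.eq_empty_or_nonempty (D.erase b) with he | hne2
      · exfalso
        apply hne.2
        apply Finset.eq_singleton_iff_unique_mem.2
        refine ⟨hbD, fun x hx => ?_⟩
        by_contra hxb
        exact absurd (Finset.mem_erase.2 ⟨hxb, hx⟩) (he ▸ Finset.notMem_empty x)
      · exact hne2
    · left
      rw [Finset.sdiff_singleton_eq_erase, Finset.erase_eq_of_notMem hbD]
      exact ⟨hD, hbD⟩
  · rintro (⟨hC, hbC⟩ | ⟨rfl, hne⟩)
    · refine ⟨C, hC, ?_, ?_⟩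
      · rw [Finset.le_iff_subset, Finset.subset_singleton_iff]
        push_neg
        exact ⟨Q.nonempty_of_mem_parts hC, fun h => hbC (by rw [h]; exact Finset.mem_singleton_self b)⟩
      · rw [Finset.sdiff_singleton_eq_erase, Finset.erase_eq_of_notMem hbC]
    · refine ⟨Q.part b, (part_spec Q).1, ?_, by rw [Finset.sdiff_singleton_eq_erase]⟩
      rw [Finset.le_iff_subset, Finset.subset_singleton_iff]
      push_neg
      refine ⟨(Q.nonempty_of_mem_parts (part_spec Q).1), fun h => ?_⟩
      rw [h, Finset.erase_singleton] at hne
      exact hne.ne_empty rfl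

lemma parts_not_bmem {P : Finpartition s} {C : Finset α} (hb : b ∉ s) (hC : C ∈ P.parts) :
    b ∉ C := fun h => hb (P.le hC h)

lemma res_extPart (hb : b ∉ s) (P : Finpartition s) : resPart hb (extPart hb P) = P := by
  apply Finpartition.ext
  ext C
  rw [mem_resPart hb, extPart_parts hb]
  have hpart : (extPart hb P).part b = {b} :=
    (part_unique (Q := extPart hb P)
      (by rw [extPart_parts hb]; exact Finset.mem_insert_self _ _) (by simp : b ∈ ({b} : Finset α))).symm
  rw [hpart, Finset.erase_singleton]
  constructor
  · rintro (⟨hC, hbC⟩ | ⟨rfl, hne⟩)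
    · rcases Finset.mem_insert.1 hC with rfl | h
      · exact absurd (Finset.mem_singleton_self b) hbC
      · exact h
    · exact absurd rfl hne.ne_empty
  · intro hC
    exact Or.inl ⟨Finset.mem_insert_of_mem hC, parts_not_bmem hb hC⟩

lemma joinPart_part_b (hb : b ∉ s) (P : Finpartition s) (B : Finset α) (hB : B ∈ P.parts) :
    (joinPart hb P B hB).part b = insert b B :=
  (part_unique (by rw [joinPart_parts]; exact Finset.mem_insert_self _ _)
    (Finset.mem_insert_self b B)).symm

lemma res_joinPart (hb : b ∉ s) (P : Finpartition s) (B : Finset α) (hB : B ∈ P.parts) :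
    resPart hb (joinPart hb P B hB) = P := by
  apply Finpartition.ext
  ext C
  rw [mem_resPart hb, joinPart_part_b hb P B hB, joinPart_parts,
    Finset.erase_insert (parts_not_bmem hb hB)]
  constructor
  · rintro (⟨hC, hbC⟩ | ⟨rfl, hne⟩)
    · rcases Finset.mem_insert.1 hC with rfl | h
      · exact absurd (Finset.mem_insert_self b B) hbC
      · exact Finset.mem_of_mem_erase h
    · exact hB
  · intro hC
    rcases eq_or_ne C B with rfl | hne
    · exact Or.inr ⟨rfl, P.nonempty_of_mem_parts hB⟩
    · exact Or.inl ⟨Finset.mem_insert_of_mem (Finset.mem_erase.2 ⟨hne, hC⟩),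
        parts_not_bmem hb hC⟩

lemma ext_resPart (hb : b ∉ s) (Q : Finpartition (insert b s)) (hT : Q.part b = {b}) :
    extPart hb (resPart hb Q) = Q := by
  apply Finpartition.ext
  ext C
  rw [extPart_parts hb, Finset.mem_insert, mem_resPart hb, hT, Finset.erase_singleton]
  constructor
  · rintro (rfl | ⟨hC, hbC⟩ | ⟨rfl, hne⟩)
    · exact hT ▸ (part_spec Q).1
    · exact hC
    · exact absurd rfl hne.ne_empty
  · intro hC
    by_cases hbC : b ∈ C
    · exact Or.inl (by rw [part_unique hC hbC, hT])
    · exact Or.inr (Or.inl ⟨hC, hbC⟩)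

lemma erase_b_nonempty (Q : Finpartition (insert b s)) (hT : Q.part b ≠ {b}) :
    ((Q.part b).erase b).Nonempty := by
  rcases Finset.eq_empty_or_nonempty ((Q.part b).erase b) with he | hne
  · exfalso
    apply hT
    apply Finset.eq_singleton_iff_unique_mem.2
    refine ⟨(part_spec Q).2, fun x hx => ?_⟩
    by_contra hxb
    exact absurd (Finset.mem_erase.2 ⟨hxb, hx⟩) (he ▸ Finset.notMem_empty x)
  · exact hne

lemma erase_b_mem_res (hb : b ∉ s) (Q : Finpartition (insert b s)) (hT : Q.part b ≠ {b}) :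
    (Q.part b).erase b ∈ (resPart hb Q).parts := by
  rw [mem_resPart hb]
  exact Or.inr ⟨rfl, erase_b_nonempty Q hT⟩

lemma join_resPart (hb : b ∉ s) (Q : Finpartition (insert b s)) (hT : Q.part b ≠ {b}) :
    joinPart hb (resPart hb Q) ((Q.part b).erase b) (erase_b_mem_res hb Q hT) = Q := by
  apply Finpartition.ext
  ext C
  rw [joinPart_parts, Finset.mem_insert, Finset.insert_erase (part_spec Q).2]
  have herase_not_part : (Q.part b).erase b ∉ Q.parts := by
    intro h
    have hne : (Q.part b).erase b ≠ Q.part b := fun he =>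
      (Finset.notMem_erase b (Q.part b)) (he.symm ▸ (part_spec Q).2)
    have hdisj := Q.disjoint h (part_spec Q).1 hne
    obtain ⟨x, hx⟩ := erase_b_nonempty Q hT
    exact (Finset.disjoint_left.1 hdisj hx) (Finset.mem_of_mem_erase hx)
  constructor
  · rintro (h | h)
    · exact h ▸ (part_spec Q).1
    · rw [Finset.mem_erase, mem_resPart hb] at h
      rcases h.2 with ⟨hC, _⟩ | ⟨he, _⟩
      · exact hC
      · exact absurd he h.1
  · intro hC
    by_cases hbC : b ∈ C
    · exact Or.inl (part_unique hC hbC)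
    · right
      rw [Finset.mem_erase, mem_resPart hb]
      refine ⟨?_, Or.inl ⟨hC, hbC⟩⟩
      intro he
      exact herase_not_part (he ▸ hC)

end Bell

/-! ### marked partitions and the insertion recursion -/

section BellCount

variable {α : Type*} [Fintype α] [DecidableEq α] {s : Finset α} {b : α}

lemma extPart_part_b (hb : b ∉ s) (P : Finpartition s) :
    (extPart hb P).part b = {b} :=
  (part_unique (Q := extPart hb P)
    (by rw [extPart_parts hb]; exact Finset.mem_insert_self _ _)
    (Finset.mem_singleton_self b)).symm

lemma joinPart_part_b_ne (hb : b ∉ s) (P : Finpartition s) (B : Finset α) (hB : B ∈ P.parts) :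
    (joinPart hb P B hB).part b ≠ {b} := by
  rw [joinPart_part_b]
  intro h
  obtain ⟨x, hx⟩ := P.nonempty_of_mem_parts hB
  have hxx : x ∈ ({b} : Finset α) := h ▸ Finset.mem_insert_of_mem hx
  rw [Finset.mem_singleton] at hxx
  exact hb (P.le hB (hxx ▸ hx))

lemma bmem_not_mem_marked (hb : b ∉ s) {P : Finpartition s} {A : Finset (Finset α)}
    (hA : A ⊆ P.parts) {D : Finset α} (hbD : b ∈ D) : D ∉ A :=
  fun h => hb (P.le (hA h) hbD)

lemma erase_b_not_part (Q : Finpartition (insert b s)) (hT : Q.part b ≠ {b}) :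
    (Q.part b).erase b ∉ Q.parts := by
  intro h
  have hne : (Q.part b).erase b ≠ Q.part b := fun he =>
    (Finset.notMem_erase b (Q.part b)) (he.symm ▸ (part_spec Q).2)
  have hdisj := Q.disjoint h (part_spec Q).1 hne
  obtain ⟨x, hx⟩ := erase_b_nonempty Q hT
  exact (Finset.disjoint_left.1 hdisj hx) (Finset.mem_of_mem_erase hx)

/-- pairs (partition of `s`, set of `a` marked blocks) -/
abbrev MP (s : Finset α) (a : ℕ) : Type _ :=
  {x : Finpartition s × Finset (Finset α) // x.2 ⊆ x.1.parts ∧ x.2.card = a}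

instance (s : Finset α) (a : ℕ) : Finite (MP s a) := by
  unfold MP; infer_instance

/-- variant with `card + 1 = a` (empty when `a = 0`) -/
abbrev MP' (s : Finset α) (a : ℕ) : Type _ :=
  {x : Finpartition s × Finset (Finset α) // x.2 ⊆ x.1.parts ∧ x.2.card + 1 = a}

instance (s : Finset α) (a : ℕ) : Finite (MP' s a) := by
  unfold MP'; infer_instance

noncomputable def K (s : Finset α) (a : ℕ) : ℕ := Nat.card (MP s a)

def g1 (hb : b ∉ s) (a : ℕ) : MP s a → MP (insert b s) a := fun x =>
  ⟨(extPart hb x.1.1, x.1.2),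
    fun C hC => by rw [extPart_parts]; exact Finset.mem_insert_of_mem (x.2.1 hC),
    x.2.2⟩

def g2 (hb : b ∉ s) (a : ℕ) : MP' s a → MP (insert b s) a := fun x =>
  ⟨(extPart hb x.1.1, insert {b} x.1.2),
    by
      intro C hC
      rw [extPart_parts]
      rcases Finset.mem_insert.1 hC with rfl | h
      · exact Finset.mem_insert_self _ _
      · exact Finset.mem_insert_of_mem (x.2.1 h),
    by
      rw [Finset.card_insert_of_notMem
        (bmem_not_mem_marked hb x.2.1 (Finset.mem_singleton_self b))]
      exact x.2.2⟩

def g3 (hb : b ∉ s) (a : ℕ) : (Σ x : MP s (a+1), {B // B ∈ x.1.2}) → MP (insert b s) a :=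
  fun z =>
  ⟨(joinPart hb z.1.1.1 z.2.1 (z.1.2.1 z.2.2), z.1.1.2.erase z.2.1),
    by
      intro C hC
      rw [joinPart_parts]
      rw [Finset.mem_erase] at hC
      exact Finset.mem_insert_of_mem (Finset.mem_erase.2 ⟨hC.1, z.1.2.1 hC.2⟩),
    by
      rw [Finset.card_erase_of_mem z.2.2, z.1.2.2]
      omega⟩

def g4 (hb : b ∉ s) (a : ℕ) : (Σ x : MP s a, {B // B ∈ x.1.2}) → MP (insert b s) a :=
  fun z =>
  ⟨(joinPart hb z.1.1.1 z.2.1 (z.1.2.1 z.2.2),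
      insert (insert b z.2.1) (z.1.1.2.erase z.2.1)),
    by
      intro C hC
      rw [joinPart_parts]
      rcases Finset.mem_insert.1 hC with rfl | h
      · exact Finset.mem_insert_self _ _
      · rw [Finset.mem_erase] at h
        exact Finset.mem_insert_of_mem (Finset.mem_erase.2 ⟨h.1, z.1.2.1 h.2⟩),
    by
      have hBA : z.2.1 ∈ z.1.1.2 := z.2.2
      have ha : 1 ≤ a := by
        rw [← z.1.2.2]
        exact Finset.card_pos.2 ⟨z.2.1, hBA⟩
      have hnm : insert b z.2.1 ∉ z.1.1.2.erase z.2.1 :=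
        fun h => bmem_not_mem_marked hb z.1.2.1 (Finset.mem_insert_self b _)
          (Finset.mem_of_mem_erase h)
      rw [Finset.card_insert_of_notMem hnm, Finset.card_erase_of_mem hBA, z.1.2.2]
      omega⟩

noncomputable def glueEquiv (hb : b ∉ s) (a : ℕ) :
    ((MP s a ⊕ MP' s a) ⊕ ((Σ x : MP s (a+1), {B // B ∈ x.1.2}) ⊕
      (Σ x : MP s a, {B // B ∈ x.1.2}))) ≃ MP (insert b s) a := by
  apply Equiv.ofBijective
    (Sum.elim (Sum.elim (g1 hb a) (g2 hb a)) (Sum.elim (g3 hb a) (g4 hb a)))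
  constructor
  · -- injectivity
    rintro ((⟨⟨P, A⟩, hsub, hcard⟩ | ⟨⟨P, A⟩, hsub, hcard⟩) |
            (⟨⟨⟨P, A⟩, hsub, hcard⟩, ⟨B, hB⟩⟩ | ⟨⟨⟨P, A⟩, hsub, hcard⟩, ⟨B, hB⟩⟩))
           ((⟨⟨P', A'⟩, hsub', hcard'⟩ | ⟨⟨P', A'⟩, hsub', hcard'⟩) |
            (⟨⟨⟨P', A'⟩, hsub', hcard'⟩, ⟨B', hB'⟩⟩ | ⟨⟨⟨P', A'⟩, hsub', hcard'⟩, ⟨B', hB'⟩⟩))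
           hxy <;>
      simp only [Sum.elim_inl, Sum.elim_inr] at hxy <;>
      have h1 := congrArg (fun w => w.1.1) hxy <;>
      have h2 := congrArg (fun w => w.1.2) hxy <;>
      simp only [g1, g2, g3, g4] at h1 h2
    -- 16 cases
    · -- g1 g1
      have hP : P = P' := by
        have := congrArg (resPart hb) h1
        rwa [res_extPart hb, res_extPart hb] at this
      subst hP
      subst h2
      rfl
    · -- g1 g2
      exfalso
      have hmem : ({b} : Finset α) ∈ A := by rw [h2]; exact Finset.mem_insert_self _ _
      exact bmem_not_mem_marked hb hsub (Finset.mem_singleton_self b) hmem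
    · -- g1 g3
      exfalso
      have c1 := extPart_part_b hb P
      rw [h1] at c1
      exact joinPart_part_b_ne hb P' B' (hsub' hB') c1
    · -- g1 g4
      exfalso
      have c1 := extPart_part_b hb P
      rw [h1] at c1
      exact joinPart_part_b_ne hb P' B' (hsub' hB') c1
    · -- g2 g1
      exfalso
      have hmem : ({b} : Finset α) ∈ A' := by rw [← h2]; exact Finset.mem_insert_self _ _
      exact bmem_not_mem_marked hb hsub' (Finset.mem_singleton_self b) hmem
    · -- g2 g2
      have hP : P = P' := by
        have := congrArg (resPart hb) h1
        rwa [res_extPart hb, res_extPart hb] at this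
      subst hP
      have hA : A = A' := by
        have e1 := congrArg (fun M => Finset.erase M {b}) h2
        rwa [Finset.erase_insert (bmem_not_mem_marked hb hsub (Finset.mem_singleton_self b)),
          Finset.erase_insert (bmem_not_mem_marked hb hsub' (Finset.mem_singleton_self b))]
          at e1
      subst hA
      rfl
    · -- g2 g3
      exfalso
      have c1 := extPart_part_b hb P
      rw [h1] at c1
      exact joinPart_part_b_ne hb P' B' (hsub' hB') c1
    · -- g2 g4
      exfalso
      have c1 := extPart_part_b hb P
      rw [h1] at c1
      exact joinPart_part_b_ne hb P' B' (hsub' hB') c1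
    · -- g3 g1
      exfalso
      have c1 := extPart_part_b hb P'
      rw [← h1] at c1
      exact joinPart_part_b_ne hb P B (hsub hB) c1
    · -- g3 g2
      exfalso
      have c1 := extPart_part_b hb P'
      rw [← h1] at c1
      exact joinPart_part_b_ne hb P B (hsub hB) c1
    · -- g3 g3
      have hP : P = P' := by
        have := congrArg (resPart hb) h1
        rwa [res_joinPart hb, res_joinPart hb] at this
      subst hP
      have hBB : B = B' := by
        have e := congrArg (fun Q : Finpartition (insert b s) => (Q.part b).erase b) h1
        rw [joinPart_part_b hb P B (hsub hB), joinPart_part_b hb P B' (hsub' hB')] at e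
        rwa [Finset.erase_insert (parts_not_bmem hb (hsub hB)),
          Finset.erase_insert (parts_not_bmem hb (hsub' hB'))] at e
      subst hBB
      have hA : A = A' := by
        have hB2 : B ∈ A := hB
        have hB2' : B ∈ A' := hB'
        rw [← Finset.insert_erase hB2, ← Finset.insert_erase hB2', h2]
      subst hA
      rfl
    · -- g3 g4
      exfalso
      have hmem : insert b B' ∈ A.erase B := by rw [h2]; exact Finset.mem_insert_self _ _
      exact bmem_not_mem_marked hb (fun C hC => hsub (Finset.mem_of_mem_erase hC))
        (Finset.mem_insert_self b B') hmem
    · -- g4 g1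
      exfalso
      have c1 := extPart_part_b hb P'
      rw [← h1] at c1
      exact joinPart_part_b_ne hb P B (hsub hB) c1
    · -- g4 g2
      exfalso
      have c1 := extPart_part_b hb P'
      rw [← h1] at c1
      exact joinPart_part_b_ne hb P B (hsub hB) c1
    · -- g4 g3
      exfalso
      have hmem : insert b B ∈ A'.erase B' := by rw [← h2]; exact Finset.mem_insert_self _ _
      exact bmem_not_mem_marked hb (fun C hC => hsub' (Finset.mem_of_mem_erase hC))
        (Finset.mem_insert_self b B) hmem
    · -- g4 g4
      have hP : P = P' := by
        have := congrArg (resPart hb) h1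
        rwa [res_joinPart hb, res_joinPart hb] at this
      subst hP
      have hBB : B = B' := by
        have e := congrArg (fun Q : Finpartition (insert b s) => (Q.part b).erase b) h1
        rw [joinPart_part_b hb P B (hsub hB), joinPart_part_b hb P B' (hsub' hB')] at e
        rwa [Finset.erase_insert (parts_not_bmem hb (hsub hB)),
          Finset.erase_insert (parts_not_bmem hb (hsub' hB'))] at e
      subst hBB
      have hA : A = A' := by
        have e1 := congrArg (fun M => Finset.erase M (insert b B)) h2
        rw [Finset.erase_insert (fun h => bmem_not_mem_marked hb
            (fun C hC => hsub (Finset.mem_of_mem_erase hC))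
            (Finset.mem_insert_self b B) h),
          Finset.erase_insert (fun h => bmem_not_mem_marked hb
            (fun C hC => hsub' (Finset.mem_of_mem_erase hC))
            (Finset.mem_insert_self b B) h)] at e1
        have hB2 : B ∈ A := hB
        have hB2' : B ∈ A' := hB'
        rw [← Finset.insert_erase hB2, ← Finset.insert_erase hB2', e1]
      subst hA
      rfl
  · -- surjectivity
    rintro ⟨⟨Q, A⟩, hsub, hcard⟩
    have hAfree : ∀ C ∈ A, C ≠ Q.part b → C ∈ (resPart hb Q).parts := by
      intro C hC hne
      rw [mem_resPart hb]
      left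
      refine ⟨hsub hC, ?_⟩
      intro hbC
      exact hne (part_unique (hsub hC) hbC)
    by_cases hTb : Q.part b = {b}
    · by_cases hTA : Q.part b ∈ A
      · -- case g2
        refine ⟨Sum.inl (Sum.inr ⟨(resPart hb Q, A.erase (Q.part b)), ?_, ?_⟩), ?_⟩
        · intro C hC
          rw [Finset.mem_erase] at hC
          exact hAfree C hC.2 hC.1
        · have h1 : 1 ≤ A.card := Finset.card_pos.2 (Finset.nonempty_of_ne_empty (Finset.ne_empty_of_mem hTA))
          rw [hcard] at h1
          rw [Finset.card_erase_of_mem hTA, hcard]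
          omega
        · simp only [Sum.elim_inl, Sum.elim_inr, g2]
          apply Subtype.ext
          simp only
          rw [ext_resPart hb Q hTb, ← hTb, Finset.insert_erase hTA]
      · -- case g1
        refine ⟨Sum.inl (Sum.inl ⟨(resPart hb Q, A), ?_, hcard⟩), ?_⟩
        · intro C hC
          exact hAfree C hC (fun h => hTA (h ▸ hC))
        · simp only [Sum.elim_inl, g1]
          apply Subtype.ext
          simp only
          rw [ext_resPart hb Q hTb]
    · have hBres : (Q.part b).erase b ∈ (resPart hb Q).parts := erase_b_mem_res hb Q hTb
      have hBnotinA : ∀ X : Finset (Finset α), X ⊆ Q.parts → (Q.part b).erase b ∉ X :=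
        fun X hX h => erase_b_not_part Q hTb (hX h)
      by_cases hTA : Q.part b ∈ A
      · -- case g4
        refine ⟨Sum.inr (Sum.inr ⟨⟨(resPart hb Q,
            insert ((Q.part b).erase b) (A.erase (Q.part b))), ?_, ?_⟩,
            ⟨(Q.part b).erase b, Finset.mem_insert_self _ _⟩⟩), ?_⟩
        · intro C hC
          rcases Finset.mem_insert.1 hC with rfl | h
          · exact hBres
          · rw [Finset.mem_erase] at h
            exact hAfree C h.2 h.1
        · rw [Finset.card_insert_of_notMem
            (fun h => hBnotinA A hsub (Finset.mem_of_mem_erase h)),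
            Finset.card_erase_of_mem hTA, hcard]
          have h1 : 1 ≤ A.card := Finset.card_pos.2 (Finset.nonempty_of_ne_empty (Finset.ne_empty_of_mem hTA))
          rw [hcard] at h1
          omega
        · simp only [Sum.elim_inr, g4]
          apply Subtype.ext
          simp only
          rw [join_resPart hb Q hTb, Finset.insert_erase (part_spec Q).2,
            Finset.erase_insert (fun h => hBnotinA A hsub (Finset.mem_of_mem_erase h)),
            Finset.insert_erase hTA]
      · -- case g3
        refine ⟨Sum.inr (Sum.inl ⟨⟨(resPart hb Q, insert ((Q.part b).erase b) A), ?_, ?_⟩,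
            ⟨(Q.part b).erase b, Finset.mem_insert_self _ _⟩⟩), ?_⟩
        · intro C hC
          rcases Finset.mem_insert.1 hC with rfl | h
          · exact hBres
          · exact hAfree C h (fun he => hTA (he ▸ h))
        · rw [Finset.card_insert_of_notMem (hBnotinA A hsub), hcard]
        · simp only [Sum.elim_inr, Sum.elim_inl, g3]
          apply Subtype.ext
          simp only
          rw [join_resPart hb Q hTb, Finset.erase_insert (hBnotinA A hsub)]

end BellCount

section BellCount2

variable {α : Type*} [Fintype α] [DecidableEq α] {s : Finset α} {b : α}

lemma nat_card_sigma_marked {X : Type*} [Finite X] (F : X → Finset (Finset α)) {n : ℕ}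
    (h : ∀ x, (F x).card = n) : Nat.card (Σ x, {B // B ∈ F x}) = n * Nat.card X := by
  classical
  cases nonempty_fintype X
  rw [Nat.card_eq_fintype_card, Fintype.card_sigma]
  have e : ∀ x : X, Fintype.card {B // B ∈ F x} = n := fun x => by
    rw [Fintype.card_coe]
    exact h x
  rw [Finset.sum_congr rfl fun x _ => e x, Finset.sum_const, Finset.card_univ, smul_eq_mul,
    Nat.card_eq_fintype_card, mul_comm]

lemma card_MP' (s : Finset α) (a : ℕ) :
    Nat.card (MP' s a) = if a = 0 then 0 else K s (a-1) := by
  split_ifs with h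
  · subst h
    have : IsEmpty (MP' s 0) := ⟨fun x => by have := x.2.2; omega⟩
    exact Nat.card_of_isEmpty
  · obtain ⟨a', rfl⟩ : ∃ a', a = a' + 1 := ⟨a - 1, by omega⟩
    rw [show a' + 1 - 1 = a' from rfl, K]
    apply Nat.card_congr
    unfold MP' MP
    apply Equiv.subtypeEquivRight
    intro x
    constructor
    · rintro ⟨h1, h2⟩; exact ⟨h1, by omega⟩
    · rintro ⟨h1, h2⟩; exact ⟨h1, by omega⟩

lemma K_step (hb : b ∉ s) (a : ℕ) :
    K (insert b s) a = (K s a + (if a = 0 then 0 else K s (a-1)))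
      + ((a+1) * K s (a+1) + a * K s a) := by
  rw [K, ← Nat.card_congr (glueEquiv hb a)]
  rw [Nat.card_sum, Nat.card_sum, Nat.card_sum]
  congr 1
  · congr 1
    exact card_MP' s a
  · congr 1
    · exact nat_card_sigma_marked (fun x : MP s (a+1) => x.1.2) (fun x => x.2.2)
    · exact nat_card_sigma_marked (fun x : MP s a => x.1.2) (fun x => x.2.2)

lemma parts_empty_partition (P : Finpartition (∅ : Finset α)) : P.parts = ∅ := by
  ext C
  simp only [Finset.notMem_empty, iff_false]
  intro hC
  have h1 : C ⊆ ∅ := P.le hC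
  rw [Finset.subset_empty] at h1
  exact (P.nonempty_of_mem_parts hC).ne_empty h1

lemma K_empty (a : ℕ) : K (∅ : Finset α) a = if a = 0 then 1 else 0 := by
  split_ifs with h
  · subst h
    rw [K, Nat.card_eq_one_iff_unique]
    constructor
    · constructor
      rintro ⟨⟨P, A⟩, h1, h2⟩ ⟨⟨P', A'⟩, h1', h2'⟩
      apply Subtype.ext
      have hPP : P = P' := by
        apply Finpartition.ext
        rw [parts_empty_partition P, parts_empty_partition P']
      have hA0 : A = ∅ := Finset.card_eq_zero.1 h2
      have hA0' : A' = ∅ := Finset.card_eq_zero.1 h2'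
      simp only
      rw [hPP, hA0, hA0']
    · exact ⟨⟨(⊥, ∅), Finset.empty_subset _, Finset.card_empty⟩⟩
  · have : IsEmpty (MP (∅ : Finset α) a) := by
      constructor
      rintro ⟨⟨P, A⟩, h1, h2⟩
      apply h
      have h1' : A ⊆ P.parts := h1
      have h2' : A.card = a := h2
      have hA0 : A = ∅ := Finset.subset_empty.1 (by rw [← parts_empty_partition P]; exact h1')
      rw [← h2', hA0, Finset.card_empty]
    exact Nat.card_of_isEmpty

lemma f_succ_eq (k a : ℕ) : f (k+1) a =
    if (k+1) % 2 = 1 then f k a + (if a = 0 then 0 else f k (a-1))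
    else f k a + (a+1) * f k (a+1) := rfl

lemma f_zero_eq (a : ℕ) : f 0 a = if a = 0 then 1 else 0 := rfl

lemma f_two_step (c a : ℕ) :
    f (2 * (c+1) - 1) a = (f (2*c-1) a + (if a = 0 then 0 else f (2*c-1) (a-1)))
      + ((a+1) * f (2*c-1) (a+1) + a * f (2*c-1) a) := by
  cases c with
  | zero =>
    rw [show 2 * (0+1) - 1 = 0 + 1 by norm_num, f_succ_eq, if_pos (by norm_num),
      show 2 * 0 - 1 = 0 by norm_num]
    rcases Nat.eq_zero_or_pos a with rfl | ha
    · simp [f_zero_eq]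
    · have ha' : a ≠ 0 := by omega
      simp [f_zero_eq, ha', Nat.succ_ne_zero]
  | succ d =>
    have h2 : ∀ e, f (2*d+2) e = f (2*d+1) e + (e+1) * f (2*d+1) (e+1) := by
      intro e
      rw [show 2*d+2 = (2*d+1) + 1 by omega, f_succ_eq, if_neg (by omega)]
    rw [show 2 * (d+1+1) - 1 = (2*d+2) + 1 by omega, f_succ_eq, if_pos (by omega),
      show 2 * (d+1) - 1 = 2*d+1 by omega]
    simp only [h2]
    rcases Nat.eq_zero_or_pos a with rfl | ha
    · simp
    · rw [if_neg (by omega), if_neg (by omega)]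
      obtain ⟨e, rfl⟩ : ∃ e, a = e + 1 := ⟨a - 1, by omega⟩
      simp only [Nat.add_sub_cancel]
      ring

lemma K_formula : ∀ s : Finset α, ∀ a : ℕ, K s a = f (2 * s.card - 1) a := by
  intro s
  induction s using Finset.induction_on with
  | empty =>
    intro a
    rw [K_empty, Finset.card_empty, show 2 * 0 - 1 = 0 by norm_num, f_zero_eq]
  | @insert b s hbs ih =>
    intro a
    rw [K_step hbs a, Finset.card_insert_of_notMem hbs, ih a, ih (a-1), ih (a+1),
      f_two_step s.card a]

end BellCount2

end VacTab

/-- For `r ≥ 1`, the number of vacillating tableaux of shape `∅` and length `r`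
equals the Bell number `B(r)`. -/
theorem card_vacillating_tableaux_empty_shape (r : ℕ) (hr : 1 ≤ r) :
    Nat.card {t : ℕ → ℕ → ℕ // IsVacTab r t (fun _ => 0)} = bell r := by
  rw [VacTab.card_vac hr]
  have e : VacTab.MP (Finset.univ : Finset (Fin r)) 0 ≃
      Finpartition (Finset.univ : Finset (Fin r)) :=
    { toFun := fun x => x.1.1
      invFun := fun P => ⟨(P, ∅), Finset.empty_subset _, Finset.card_empty⟩
      left_inv := fun x => by
        apply Subtype.ext
        obtain ⟨⟨P, A⟩, h1, h2⟩ := x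
        have hA0 : A = ∅ := Finset.card_eq_zero.1 h2
        simp only
        rw [hA0]
      right_inv := fun P => rfl }
  have h2 : Nat.card (VacTab.MP (Finset.univ : Finset (Fin r)) 0)
      = VacTab.f (2 * r - 1) 0 := by
    have h3 := VacTab.K_formula (Finset.univ : Finset (Fin r)) 0
    rwa [Finset.card_univ, Fintype.card_fin] at h3
  show VacTab.f (2 * r - 1) 0 = Nat.card (Finpartition (Finset.univ : Finset (Fin r)))
  rw [← Nat.card_congr e]
  exact h2.symm
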